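/- For every positive integer k and n ≥ 0: D_{2k+1,1-k}((2k+1)n) = (−1)^{kn}, D_{2k+1,1-k}((2k+1)n + k) = (−1)^{kn + binom(k,2)}, and D_{2k+1,1-k}((2k+1)n + j) = 0 for all other residues j modulo 2k+1. -/

import Mathlib

/-- The `k`-th convolution power of the Catalan numbers,
`C_{k,n} = (k/(2n+k)) * binom(2n+k, n)` for `n ≥ 0`, and `C_{k,n} = 0` for `n < 0`. -/
noncomputable def catalanConv (k : ℕ) (n : ℤ) : ℚ :=
  if 0 ≤ n then (k : ℚ) / (2 * (n : ℚ) + k) * ((2 * n.toNat + k).choose n.toNat) else 0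

/-- The Hankel determinant `D_{k,m}(N) = det (C_{k,i+j+m})_{i,j=0}^{N-1}`, `D_{k,m}(0) = 1`. -/
noncomputable def hankelDet (k : ℕ) (m : ℤ) (N : ℕ) : ℚ :=
  Matrix.det (Matrix.of fun i j : Fin N => catalanConv k ((i : ℤ) + (j : ℤ) + m))

open PowerSeries Finset

namespace Stmt11

/-- The Catalan number generating function. -/
noncomputable def B : PowerSeries ℚ := PowerSeries.mk fun n => (catalan n : ℚ)

lemma constantCoeff_B : (PowerSeries.constantCoeff) B = 1 := by simp [B]

lemma B_ne_zero : B ≠ 0 := by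
  intro h
  have := constantCoeff_B
  rw [h] at this; simp at this

lemma hB : B = 1 + PowerSeries.X * B ^ 2 := by
  ext n
  rcases n with _ | n
  · simp [B]
  · rw [map_add, PowerSeries.coeff_succ_X_mul]
    have h1 : (PowerSeries.coeff (n+1)) (1 : PowerSeries ℚ) = 0 := by
      simp
    rw [h1, zero_add]
    rw [pow_two, PowerSeries.coeff_mul]
    simp only [B, PowerSeries.coeff_mk]
    rw [catalan_succ' n]
    push_cast
    rfl

/-- Chebyshev-like family: e₀ = 2, e₁ = 1, e_{a+2} = e_{a+1} - X e_a. -/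
noncomputable def E : ℕ → Polynomial ℚ
  | 0 => 2
  | 1 => 1
  | (a+2) => E (a+1) - Polynomial.X * E a

lemma hE : ∀ a : ℕ, B ^ a * (E a : PowerSeries ℚ) = 1 + (PowerSeries.X * B ^ 2) ^ a := by
  have key : ∀ a : ℕ, (B ^ a * (E a : PowerSeries ℚ) = 1 + (PowerSeries.X * B ^ 2) ^ a)
      ∧ (B ^ (a+1) * (E (a+1) : PowerSeries ℚ) = 1 + (PowerSeries.X * B ^ 2) ^ (a+1)) := by
    intro a
    induction a with
    | zero =>
      constructor
      · show B ^ 0 * ((2 : Polynomial ℚ) : PowerSeries ℚ) = _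
        have : ((2 : Polynomial ℚ) : PowerSeries ℚ) = 2 := by
          have h2 : (2 : Polynomial ℚ) = 1 + 1 := by norm_num
          rw [h2, Polynomial.coe_add, Polynomial.coe_one]; norm_num
        rw [this]; ring
      · show B ^ 1 * ((1 : Polynomial ℚ) : PowerSeries ℚ) = _
        rw [Polynomial.coe_one]
        rw [pow_one, pow_one, mul_one]
        linear_combination hB
    | succ n ih =>
      refine ⟨ih.2, ?_⟩
      show B ^ (n+2) * ((E (n+1) - Polynomial.X * E n : Polynomial ℚ) : PowerSeries ℚ) = _
      rw [Polynomial.coe_sub, Polynomial.coe_mul, Polynomial.coe_X]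
      have h1 := ih.1
      have h2 := ih.2
      linear_combination (B * h2) - ((PowerSeries.X * B^2) * h1)
        + (1 + (PowerSeries.X * B^2)^(n+1)) * hB
  exact fun a => (key a).1

/-- The convergent polynomials. -/
noncomputable def Qp (c : ℕ) : ℕ → Polynomial ℚ
  | 0 => 1
  | 1 => E c
  | (i+2) => E (c*(i+2)) + Polynomial.X ^ c * Qp c i

lemma hQ (c : ℕ) : ∀ i : ℕ, B ^ (c*i) * (Qp c i : PowerSeries ℚ)
    = ∑ u ∈ Finset.range (i+1), ((PowerSeries.X * B ^ 2) ^ c) ^ u := by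
  have key : ∀ i : ℕ,
      (B ^ (c*i) * (Qp c i : PowerSeries ℚ)
        = ∑ u ∈ Finset.range (i+1), ((PowerSeries.X * B ^ 2) ^ c) ^ u)
      ∧ (B ^ (c*(i+1)) * (Qp c (i+1) : PowerSeries ℚ)
        = ∑ u ∈ Finset.range (i+2), ((PowerSeries.X * B ^ 2) ^ c) ^ u) := by
    intro i
    induction i with
    | zero =>
      constructor
      · show B ^ (c*0) * ((1 : Polynomial ℚ) : PowerSeries ℚ) = _
        rw [Polynomial.coe_one]; simp
      · show B ^ (c*1) * ((E c : Polynomial ℚ) : PowerSeries ℚ) = _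
        rw [mul_one, hE c]
        rw [Finset.sum_range_succ, Finset.sum_range_one]
        ring
    | succ n ih =>
      refine ⟨ih.2, ?_⟩
      show B ^ (c*(n+2)) * ((E (c*(n+2)) + Polynomial.X ^ c * Qp c n : Polynomial ℚ) : PowerSeries ℚ) = _
      rw [Polynomial.coe_add, Polynomial.coe_mul, Polynomial.coe_pow, Polynomial.coe_X]
      have h1 := ih.1
      have hEc := hE (c*(n+2))
      rw [geom_sum_succ (x := (PowerSeries.X * B^2)^c) (n := n+2)]
      rw [Finset.sum_range_succ (f := fun u => ((PowerSeries.X * B ^ 2) ^ c) ^ u) (n := n+1)]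
      rw [← h1] at *
      linear_combination hEc + (PowerSeries.X*B^2)^c * h1
  exact fun i => (key i).1

/-- The series F = X^(k-1) B^(2k+1). -/
noncomputable def Fk (k : ℕ) : PowerSeries ℚ := PowerSeries.X ^ (k-1) * B ^ (2*k+1)

lemma master (k : ℕ) (i : ℕ) :
    (Qp (2*k+1) (i+1) : PowerSeries ℚ) * Fk k
      = PowerSeries.X ^ (k-1) * (Qp (2*k+1) i : PowerSeries ℚ)
        + PowerSeries.X ^ ((2*k+1)*(i+1)+(k-1)) * B ^ ((2*k+1)*(i+1)+(2*k+1)) := by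
  set c := 2*k+1 with hc
  apply mul_left_cancel₀ (pow_ne_zero (c*(i+1)) B_ne_zero)
  have h1 := hQ c i
  have h2 := hQ c (i+1)
  have hsum : ∑ u ∈ Finset.range (i+2), ((PowerSeries.X * B ^ 2) ^ c) ^ u
      = (∑ u ∈ Finset.range (i+1), ((PowerSeries.X * B ^ 2) ^ c) ^ u)
        + ((PowerSeries.X * B ^ 2) ^ c) ^ (i+1) := Finset.sum_range_succ _ _
  calc B ^ (c*(i+1)) * ((Qp c (i+1) : PowerSeries ℚ) * Fk k)
      = (B ^ (c*(i+1)) * (Qp c (i+1) : PowerSeries ℚ)) * Fk k := by ring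
    _ = ((∑ u ∈ Finset.range (i+1), ((PowerSeries.X * B ^ 2) ^ c) ^ u)
        + ((PowerSeries.X * B ^ 2) ^ c) ^ (i+1)) * Fk k := by rw [h2, hsum]
    _ = (B ^ (c*i) * (Qp c i : PowerSeries ℚ)) * Fk k
        + ((PowerSeries.X * B ^ 2) ^ c) ^ (i+1) * Fk k := by rw [h1]; ring
    _ = B ^ (c*(i+1)) * (PowerSeries.X ^ (k-1) * (Qp c i : PowerSeries ℚ)
        + PowerSeries.X ^ (c*(i+1)+(k-1)) * B ^ (c*(i+1)+c)) := by
        rw [Fk, hc]; ring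
end Stmt11

namespace Stmt11
open PowerSeries Finset

lemma coeffX (n t : ℕ) (φ : PowerSeries ℚ) :
    (PowerSeries.coeff t) (PowerSeries.X ^ n * φ)
      = if n ≤ t then (PowerSeries.coeff (t - n)) φ else 0 := by
  by_cases h : n ≤ t
  · rw [if_pos h]
    obtain ⟨d, rfl⟩ : ∃ d, t = d + n := ⟨t - n, by omega⟩
    have hd : d + n - n = d := by omega
    rw [hd, PowerSeries.coeff_X_pow_mul]
  · rw [if_neg h, PowerSeries.coeff_mul]
    apply Finset.sum_eq_zero
    intro p hp
    rw [Finset.HasAntidiagonal.mem_antidiagonal] at hp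
    have : p.1 ≠ n := by omega
    rw [PowerSeries.coeff_X_pow, if_neg this, zero_mul]

lemma E_natDegree : ∀ a : ℕ, (E a).natDegree ≤ a / 2 := by
  have key : ∀ a : ℕ, (E a).natDegree ≤ a / 2 ∧ (E (a+1)).natDegree ≤ (a+1) / 2 := by
    intro a
    induction a with
    | zero =>
      constructor
      · show (2 : Polynomial ℚ).natDegree ≤ 0
        simp
      · show (1 : Polynomial ℚ).natDegree ≤ 0
        simp
    | succ n ih =>
      refine ⟨ih.2, ?_⟩
      show (E (n+1) - Polynomial.X * E n).natDegree ≤ (n+2)/2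
      refine le_trans (Polynomial.natDegree_sub_le _ _) ?_
      have h1 : (E (n+1)).natDegree ≤ (n+1)/2 := ih.2
      have h2 : (Polynomial.X * E n).natDegree ≤ 1 + n/2 := by
        refine le_trans (Polynomial.natDegree_mul_le) ?_
        have := ih.1
        simp only [Polynomial.natDegree_X]
        omega
      simp only [sup_le_iff]
      omega
  exact fun a => (key a).1

lemma E_succ_succ (a : ℕ) : E (a+2) = E (a+1) - Polynomial.X * E a := rfl
lemma E_one : E 1 = 1 := rfl
lemma E_zero : E 0 = 2 := rfl

lemma E_coeff_zero : ∀ a : ℕ, (E (a+1)).coeff 0 = 1 := by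
  have key : ∀ a : ℕ, (E (a+1)).coeff 0 = 1 ∧ (E (a+2)).coeff 0 = 1 := by
    intro a
    induction a with
    | zero =>
      constructor
      · rw [E_one]; simp
      · rw [E_succ_succ, Polynomial.coeff_sub, Polynomial.mul_coeff_zero,
          Polynomial.coeff_X_zero, E_one]
        simp
    | succ n ih =>
      refine ⟨ih.2, ?_⟩
      rw [E_succ_succ, Polynomial.coeff_sub, Polynomial.mul_coeff_zero,
        Polynomial.coeff_X_zero, ih.2]
      ring
  exact fun a => (key a).1

lemma Qp_succ_succ (c i : ℕ) : Qp c (i+2) = E (c*(i+2)) + Polynomial.X ^ c * Qp c i := rfl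

lemma Qp_coeff_zero (c : ℕ) (hc : 1 ≤ c) : ∀ i : ℕ, (Qp c i).coeff 0 = 1 := by
  intro i
  match i with
  | 0 => show (1 : Polynomial ℚ).coeff 0 = 1; simp
  | 1 =>
    show (E c).coeff 0 = 1
    obtain ⟨c', rfl⟩ : ∃ c', c = c' + 1 := ⟨c - 1, by omega⟩
    exact E_coeff_zero c'
  | (i+2) =>
    rw [Qp_succ_succ, Polynomial.coeff_add, Polynomial.mul_coeff_zero]
    have h1 : (Polynomial.X ^ c : Polynomial ℚ).coeff 0 = 0 := by
      rw [Polynomial.coeff_X_pow]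
      simp; omega
    rw [h1, zero_mul]
    have h2 : c*(i+2) = (c*(i+2) - 1) + 1 := by
      have : 1*1 ≤ c*(i+2) := Nat.mul_le_mul hc (by omega)
      omega
    rw [h2, E_coeff_zero]
    ring

/-- The degree sequence. -/
def dd (k i : ℕ) : ℕ := (2*k+1)*(i/2) + k*(i%2)

lemma dd_even (k j : ℕ) : dd k (2*j) = (2*k+1)*j := by
  unfold dd
  have h1 : 2*j/2 = j := by omega
  have h2 : (2*j) % 2 = 0 := by omega
  rw [h1, h2]; ring

lemma dd_odd (k j : ℕ) : dd k (2*j+1) = (2*k+1)*j + k := by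
  unfold dd
  have h1 : (2*j+1)/2 = j := by omega
  have h2 : (2*j+1) % 2 = 1 := by omega
  rw [h1, h2]; ring

lemma Qp_natDegree (k : ℕ) : ∀ i : ℕ, (Qp (2*k+1) i).natDegree ≤ dd k i := by
  have key : ∀ j : ℕ, (Qp (2*k+1) (2*j)).natDegree ≤ (2*k+1)*j
      ∧ (Qp (2*k+1) (2*j+1)).natDegree ≤ (2*k+1)*j + k := by
    intro j
    induction j with
    | zero =>
      constructor
      · show (1 : Polynomial ℚ).natDegree ≤ 0
        simp
      · show (E (2*k+1)).natDegree ≤ 0 + k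
        refine le_trans (E_natDegree (2*k+1)) (by omega)
    | succ n ih =>
      have heq1 : 2*(n+1) = 2*n + 2 := by ring
      have heq2 : 2*(n+1)+1 = (2*n+1) + 2 := by ring
      constructor
      · rw [heq1, Qp_succ_succ]
        refine le_trans (Polynomial.natDegree_add_le _ _) ?_
        have h1 : (E ((2*k+1)*(2*n+2))).natDegree ≤ (2*k+1)*(n+1) := by
          refine le_trans (E_natDegree _) ?_
          have : (2*k+1)*(2*n+2) = 2*((2*k+1)*(n+1)) := by ring
          rw [this]
          omega
        have h2 : (Polynomial.X ^ (2*k+1) * Qp (2*k+1) (2*n)).natDegree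
            ≤ (2*k+1) + (2*k+1)*n := by
          refine le_trans (Polynomial.natDegree_mul_le) ?_
          have := ih.1
          simp only [Polynomial.natDegree_X_pow]
          omega
        simp only [sup_le_iff]
        constructor
        · exact h1
        · refine le_trans h2 (by ring_nf; omega)
      · rw [heq2, Qp_succ_succ]
        refine le_trans (Polynomial.natDegree_add_le _ _) ?_
        have h1 : (E ((2*k+1)*((2*n+1)+2))).natDegree ≤ (2*k+1)*(n+1) + k := by
          refine le_trans (E_natDegree _) ?_
          have heq : (2*k+1)*((2*n+1)+2) = 2*((2*k+1)*(n+1) + k)+1 := by ring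
          rw [heq]
          omega
        have h2 : (Polynomial.X ^ (2*k+1) * Qp (2*k+1) (2*n+1)).natDegree
            ≤ (2*k+1) + ((2*k+1)*n + k) := by
          refine le_trans (Polynomial.natDegree_mul_le) ?_
          have := ih.2
          simp only [Polynomial.natDegree_X_pow]
          omega
        simp only [sup_le_iff]
        constructor
        · exact h1
        · refine le_trans h2 (by ring_nf; omega)
  intro i
  rcases Nat.even_or_odd i with ⟨j, hj⟩ | ⟨j, hj⟩
  · have : i = 2*j := by omega
    rw [this, dd_even]; exact (key j).1
  · have : i = 2*j+1 := by omega
    rw [this, dd_odd]; exact (key j).2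

lemma dd_step (k i : ℕ) : dd k i + k ≤ dd k (i+1) ∧ dd k (i+1) ≤ dd k i + (k+1) := by
  rcases Nat.even_or_odd i with ⟨j, hj⟩ | ⟨j, hj⟩
  · have : i = 2*j := by omega
    rw [this, dd_even, dd_odd]
    omega
  · have h : i = 2*j+1 := by omega
    have h2 : i + 1 = 2*(j+1) := by omega
    rw [h2, dd_even, h, dd_odd]
    constructor <;> nlinarith
  
lemma dd_pair (k i : ℕ) : dd k i + dd k (i+1) = (2*k+1)*i + k := by
  rcases Nat.even_or_odd i with ⟨j, hj⟩ | ⟨j, hj⟩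
  · have : i = 2*j := by omega
    subst this
    rw [dd_even, dd_odd]
    ring
  · have h : i = 2*j+1 := by omega
    subst h
    have h2 : (2*j+1) + 1 = 2*(j+1) := by omega
    rw [h2, dd_even, dd_odd]
    ring

lemma dd_le (k i : ℕ) : dd k i ≤ (2*k+1)*i := by
  rcases Nat.even_or_odd i with ⟨j, hj⟩ | ⟨j, hj⟩
  · have : i = 2*j := by omega
    subst this
    rw [dd_even]
    nlinarith
  · have : i = 2*j+1 := by omega
    subst this
    rw [dd_odd]
    nlinarith

lemma dd_ge (k i : ℕ) : k ≤ dd k (i+1) := by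
  have := (dd_step k i).1
  omega

lemma Fk_coeff_van (k t : ℕ) (h : t + 1 < k) : (PowerSeries.coeff t) (Fk k) = 0 := by
  rw [Fk, coeffX, if_neg (by omega)]

lemma Fk_coeff_piv (k : ℕ) (hk : 1 ≤ k) : (PowerSeries.coeff (k-1)) (Fk k) = 1 := by
  rw [Fk, coeffX, if_pos (le_refl _), Nat.sub_self, PowerSeries.coeff_zero_eq_constantCoeff,
    map_pow, constantCoeff_B, one_pow]

lemma Qp_van (k : ℕ) (hk : 1 ≤ k) (i t : ℕ) (h1 : dd k i ≤ t) (h2 : t + 1 < (2*k+1)*i + k) :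
    (PowerSeries.coeff t) ((Qp (2*k+1) i : PowerSeries ℚ) * Fk k) = 0 := by
  cases i with
  | zero =>
    show (PowerSeries.coeff t) (((1 : Polynomial ℚ) : PowerSeries ℚ) * Fk k) = 0
    rw [Polynomial.coe_one, one_mul]
    exact Fk_coeff_van k t (by omega)
  | succ i =>
    rw [master k i, map_add, coeffX, coeffX]
    have hd1 : dd k i + k ≤ dd k (i+1) := (dd_step k i).1
    rw [if_pos (by omega : k - 1 ≤ t)]
    rw [if_neg (by omega : ¬ ((2*k+1)*(i+1)+(k-1) ≤ t))]
    rw [Polynomial.coeff_coe]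
    rw [Polynomial.coeff_eq_zero_of_natDegree_lt]
    · ring
    · have := Qp_natDegree k i
      omega

lemma Qp_piv (k : ℕ) (hk : 1 ≤ k) (i : ℕ) :
    (PowerSeries.coeff ((2*k+1)*i + (k-1))) ((Qp (2*k+1) i : PowerSeries ℚ) * Fk k) = 1 := by
  cases i with
  | zero =>
    show (PowerSeries.coeff _) (((1 : Polynomial ℚ) : PowerSeries ℚ) * Fk k) = 1
    rw [Polynomial.coe_one, one_mul]
    have : (2*k+1)*0 + (k-1) = k-1 := by omega
    rw [this]
    exact Fk_coeff_piv k hk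
  | succ i =>
    rw [master k i, map_add, coeffX, coeffX]
    rw [if_pos (by omega : k - 1 ≤ (2*k+1)*(i+1)+(k-1))]
    rw [if_pos (le_refl _)]
    rw [Nat.sub_self, PowerSeries.coeff_zero_eq_constantCoeff, map_pow, constantCoeff_B, one_pow]
    rw [Polynomial.coeff_coe]
    rw [Polynomial.coeff_eq_zero_of_natDegree_lt]
    · ring
    · have hle := Qp_natDegree k i
      have hle2 := dd_le k i
      have : (2*k+1)*(i+1)+(k-1) - (k-1) = (2*k+1)*(i+1) := by omega
      rw [this]
      have : (2*k+1)*i < (2*k+1)*(i+1) := by nlinarith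
      omega

end Stmt11

namespace Stmt11
open PowerSeries Finset

lemma cat_choose (n : ℕ) : (2*n+1) * catalan n = (2*n+1).choose n := by
  have f1 : (n + 1) * catalan n = (2*n).choose n := by
    have := succ_mul_catalan_eq_centralBinom n
    rwa [Nat.centralBinom] at this
  have f2 : (2*n+1) * (2*n).choose n = (2*n+1).choose (n+1) * (n+1) :=
    Nat.add_one_mul_choose_eq (2*n) n
  have f3 : (2*n+1).choose (n+1) = (2*n+1).choose n := by
    have h := Nat.choose_symm (show n+1 ≤ 2*n+1 by omega)
    have h2 : 2*n+1 - (n+1) = n := by omega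
    rw [h2] at h
    omega
  have : (2*n+1) * catalan n * (n+1) = (2*n+1).choose n * (n+1) := by
    calc (2*n+1) * catalan n * (n+1) = (2*n+1) * ((n+1) * catalan n) := by ring
      _ = (2*n+1) * (2*n).choose n := by rw [f1]
      _ = (2*n+1).choose (n+1) * (n+1) := f2
      _ = (2*n+1).choose n * (n+1) := by rw [f3]
  exact Nat.eq_of_mul_eq_mul_right (by omega) this

lemma cat_choose_two (n : ℕ) : (n+1) * catalan (n+1) = (2*n+2).choose n := by
  have f1 : (n + 2) * catalan (n+1) = (2*n+2).choose (n+1) := by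
    have := succ_mul_catalan_eq_centralBinom (n+1)
    rwa [Nat.centralBinom, show 2*(n+1) = 2*n+2 from by ring] at this
  have f2 : (2*n+2).choose (n+1) * (n+1) = (2*n+2).choose n * (n+2) := by
    have := Nat.choose_succ_right_eq (2*n+2) n
    have h2 : 2*n+2 - n = n+2 := by omega
    rwa [h2] at this
  have : (n+1) * catalan (n+1) * (n+2) = (2*n+2).choose n * (n+2) := by
    calc (n+1) * catalan (n+1) * (n+2) = ((n+2) * catalan (n+1)) * (n+1) := by ring
      _ = (2*n+2).choose (n+1) * (n+1) := by rw [f1]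
      _ = (2*n+2).choose n * (n+2) := f2
  exact Nat.eq_of_mul_eq_mul_right (by omega) this

lemma coeff_B_sq (n : ℕ) : (PowerSeries.coeff n) (B^2) = (catalan (n+1) : ℚ) := by
  have h := congrArg (PowerSeries.coeff (n+1)) hB
  rw [map_add, PowerSeries.coeff_succ_X_mul] at h
  have h1 : (PowerSeries.coeff (n+1)) (1 : PowerSeries ℚ) = 0 := by simp
  rw [h1, zero_add] at h
  rw [← h, B, PowerSeries.coeff_mk]

lemma coeff_B_pow (m : ℕ) : ∀ n : ℕ, (PowerSeries.coeff n) (B^(m+1))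
    = ((m+1 : ℕ) : ℚ) / ((2*n+m+1 : ℕ) : ℚ) * (((2*n+m+1).choose n : ℕ) : ℚ) := by
  have key : ∀ m : ℕ, (∀ n : ℕ, (PowerSeries.coeff n) (B^(m+1))
      = ((m+1 : ℕ) : ℚ) / ((2*n+m+1 : ℕ) : ℚ) * (((2*n+m+1).choose n : ℕ) : ℚ))
      ∧ (∀ n : ℕ, (PowerSeries.coeff n) (B^(m+2))
      = ((m+2 : ℕ) : ℚ) / ((2*n+m+2 : ℕ) : ℚ) * (((2*n+m+2).choose n : ℕ) : ℚ)) := by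
    intro m
    induction m with
    | zero =>
      constructor
      · intro n
        rw [pow_one, B, PowerSeries.coeff_mk]
        have hc : ((2*n+1:ℕ):ℚ) * (catalan n : ℚ) = (((2*n+1).choose n : ℕ):ℚ) := by
          exact_mod_cast cat_choose n
        rw [show 2*n+0+1 = 2*n+1 from by omega]
        have hpos : ((2*n+1:ℕ):ℚ) ≠ 0 := by positivity
        rw [div_mul_eq_mul_div, eq_div_iff hpos]
        push_cast at hc ⊢
        linear_combination hc
      · intro n
        rw [coeff_B_sq]
        have hc : ((n+1:ℕ):ℚ) * (catalan (n+1) : ℚ) = (((2*n+2).choose n : ℕ) : ℚ) := by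
          exact_mod_cast cat_choose_two n
        rw [show (2*n+0+2) = (2*n+2) from by omega]
        have hpos : ((2*n+2:ℕ):ℚ) ≠ 0 := by positivity
        rw [div_mul_eq_mul_div, eq_div_iff hpos]
        push_cast at hc ⊢
        linear_combination 2 * hc
    | succ m ih =>
      refine ⟨ih.2, ?_⟩
      intro n
      -- B^(m+3) : coeff n = coeff (n+1) B^(m+2) - coeff (n+1) B^(m+1)
      have hXB : PowerSeries.X * B^(m+3) = B^(m+2) - B^(m+1) := by
        linear_combination (-(B^(m+1))) * hB
      have hstep : (PowerSeries.coeff n) (B^(m+3))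
          = (PowerSeries.coeff (n+1)) (B^(m+2)) - (PowerSeries.coeff (n+1)) (B^(m+1)) := by
        rw [← PowerSeries.coeff_succ_X_mul n (B^(m+3)), hXB, map_sub]
      rw [show m+1+2 = m+3 from rfl, hstep, ih.1 (n+1), ih.2 (n+1)]
      -- now a pure choose identity
      have hn1 : ((n:ℚ)+1) ≠ 0 := by positivity
      have e1 : (((2*n+m+4).choose (n+1) : ℕ) : ℚ) * ((n:ℚ)+1)
          = (((2*n:ℚ)+(m:ℚ)+4)) * (((2*n+m+3).choose n : ℕ) : ℚ) := by
        have := Nat.add_one_mul_choose_eq (2*n+m+3) n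
        have h' : (2*n+m+3) + 1 = 2*n+m+4 := by omega
        rw [h'] at this
        exact_mod_cast (by push_cast [← this]; ring)
      have e2 : (((2*n+m+3).choose (n+1) : ℕ) : ℚ) * ((n:ℚ)+1)
          = (((2*n+m+3).choose n : ℕ) : ℚ) * ((n:ℚ)+(m:ℚ)+3) := by
        have := Nat.choose_succ_right_eq (2*n+m+3) n
        have h' : 2*n+m+3 - n = n+m+3 := by omega
        rw [h'] at this
        exact_mod_cast (by push_cast [this]; ring)
      have hX1 : (((2*n+m+4).choose (n+1) : ℕ) : ℚ)
          = ((2*n:ℚ)+(m:ℚ)+4) * (((2*n+m+3).choose n : ℕ) : ℚ) / ((n:ℚ)+1) := by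
        rw [eq_div_iff hn1]; linear_combination e1
      have hX2 : (((2*n+m+3).choose (n+1) : ℕ) : ℚ)
          = (((2*n+m+3).choose n : ℕ) : ℚ) * ((n:ℚ)+(m:ℚ)+3) / ((n:ℚ)+1) := by
        rw [eq_div_iff hn1]; linear_combination e2
      have harg1 : 2*(n+1)+m+2 = 2*n+m+4 := by omega
      have harg2 : 2*(n+1)+m+1 = 2*n+m+3 := by omega
      have harg3 : 2*n+(m+1)+2 = 2*n+m+3 := by omega
      rw [harg1, harg2, harg3, hX1, hX2]
      have d1 : ((2*n+m+4 : ℕ):ℚ) ≠ 0 := by positivity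
      have d2 : ((2*n+m+3 : ℕ):ℚ) ≠ 0 := by positivity
      push_cast
      push_cast at d1 d2
      field_simp
      ring
  exact fun n => (key m).1 n

lemma entry (k : ℕ) (hk : 1 ≤ k) (t : ℕ) :
    catalanConv (2*k+1) ((t:ℤ) + 1 - (k:ℤ)) = (PowerSeries.coeff t) (Fk k) := by
  by_cases h : (0:ℤ) ≤ (t:ℤ) + 1 - (k:ℤ)
  · have ht : k - 1 ≤ t := by omega
    set n : ℕ := t + 1 - k with hn
    have hz : (t:ℤ) + 1 - (k:ℤ) = (n:ℤ) := by omega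
    rw [catalanConv, if_pos h, hz]
    have htn : ((n:ℤ)).toNat = n := by omega
    rw [htn]
    rw [Fk, coeffX, if_pos (by omega : k - 1 ≤ t)]
    have hexp : t - (k-1) = n := by omega
    rw [hexp]
    rw [show 2*k+1 = (2*k)+1 from rfl, coeff_B_pow (2*k) n]
    have harg : 2*n+2*k+1 = 2*n+(2*k+1) := by omega
    rw [harg]
    push_cast
    ring
  · rw [catalanConv, if_neg h]
    rw [Fk, coeffX, if_neg (by omega : ¬ (k - 1 ≤ t))]

end Stmt11

namespace Stmt11
open PowerSeries Finset

/-- Hankel matrix of the coefficients of a power series. -/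
noncomputable def HM (G : PowerSeries ℚ) (N : ℕ) : Matrix (Fin N) (Fin N) ℚ :=
  Matrix.of fun i j : Fin N => (PowerSeries.coeff ((i:ℕ) + (j:ℕ))) G

lemma convSum (p : Polynomial ℚ) (d : ℕ) (hdeg : p.natDegree ≤ d) (G : PowerSeries ℚ)
    (s : ℕ) (hs : d ≤ s) :
    ∑ u ∈ Finset.range (d+1), p.coeff u * (PowerSeries.coeff (s-u)) G
      = (PowerSeries.coeff s) ((p : PowerSeries ℚ) * G) := by
  have hsub : Finset.range (d+1) ⊆ Finset.range (s+1) := by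
    intro x hx; simp only [Finset.mem_range] at *; omega
  calc ∑ u ∈ Finset.range (d+1), p.coeff u * (PowerSeries.coeff (s-u)) G
      = ∑ u ∈ Finset.range (d+1),
          (PowerSeries.coeff u) (p : PowerSeries ℚ) * (PowerSeries.coeff (s-u)) G := by
        refine Finset.sum_congr rfl (fun u _ => ?_)
        rw [Polynomial.coeff_coe]
    _ = ∑ u ∈ Finset.range (s+1),
          (PowerSeries.coeff u) (p : PowerSeries ℚ) * (PowerSeries.coeff (s-u)) G := by
        refine Finset.sum_subset hsub (fun u hu hnu => ?_)
        simp only [Finset.mem_range] at hu hnu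
        rw [Polynomial.coeff_coe, Polynomial.coeff_eq_zero_of_natDegree_lt (by omega), zero_mul]
    _ = (PowerSeries.coeff s) ((p : PowerSeries ℚ) * G) := by
        rw [PowerSeries.coeff_mul, Finset.Nat.sum_antidiagonal_eq_sum_range_succ_mk]

lemma zeroLemma (G : PowerSeries ℚ) (p : Polynomial ℚ) (d N : ℕ) (hd : d < N)
    (h0 : p.coeff 0 = 1) (hdeg : p.natDegree ≤ d)
    (hvan : ∀ t, d ≤ t → t < d + N → (PowerSeries.coeff t) ((p : PowerSeries ℚ) * G) = 0) :
    (HM G N).det = 0 := by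
  rw [← Matrix.exists_mulVec_eq_zero_iff]
  refine ⟨fun t => if (t:ℕ) ≤ d then p.coeff (d - (t:ℕ)) else 0, ?_, ?_⟩
  · intro hcon
    have := congrFun hcon ⟨d, hd⟩
    simp only [Pi.zero_apply] at this
    rw [if_pos (le_refl d), Nat.sub_self, h0] at this
    exact one_ne_zero this
  · funext r
    show (∑ t : Fin N, HM G N r t * (if (t:ℕ) ≤ d then p.coeff (d - (t:ℕ)) else 0)) = 0
    calc ∑ t : Fin N, HM G N r t * (if (t:ℕ) ≤ d then p.coeff (d - (t:ℕ)) else 0)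
        = ∑ t : Fin N, (fun u : ℕ => (PowerSeries.coeff ((r:ℕ)+u)) G *
            (if u ≤ d then p.coeff (d - u) else 0)) (t:ℕ) :=
          Finset.sum_congr rfl (fun t _ => rfl)
      _ = ∑ u ∈ Finset.range N, (PowerSeries.coeff ((r:ℕ)+u)) G *
            (if u ≤ d then p.coeff (d - u) else 0) := by
          exact Fin.sum_univ_eq_sum_range
            (fun u : ℕ => (PowerSeries.coeff ((r:ℕ)+u)) G *
              (if u ≤ d then p.coeff (d - u) else 0)) N
      _ = ∑ u ∈ Finset.range (d+1), (PowerSeries.coeff ((r:ℕ)+u)) G *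
            (if u ≤ d then p.coeff (d - u) else 0) := by
          refine (Finset.sum_subset (fun x hx => ?_) (fun u hu hnu => ?_)).symm
          · simp only [Finset.mem_range] at *; omega
          · simp only [Finset.mem_range] at hu hnu
            rw [if_neg (by omega), mul_zero]
      _ = ∑ u ∈ Finset.range (d+1),
            (fun j : ℕ => p.coeff j * (PowerSeries.coeff ((r:ℕ) + d - j)) G) (d + 1 - 1 - u) := by
          refine Finset.sum_congr rfl (fun u hu => ?_)
          simp only [Finset.mem_range] at hu
          have h1 : d + 1 - 1 - u = d - u := by omega
          rw [h1]
          show (PowerSeries.coeff ((r:ℕ)+u)) G * (if u ≤ d then p.coeff (d - u) else 0)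
            = p.coeff (d-u) * (PowerSeries.coeff ((r:ℕ) + d - (d-u))) G
          have h2 : (r:ℕ) + d - (d - u) = (r:ℕ) + u := by omega
          rw [if_pos (by omega), h2]
          ring
      _ = ∑ u ∈ Finset.range (d+1), p.coeff u * (PowerSeries.coeff ((r:ℕ) + d - u)) G := by
          exact Finset.sum_range_reflect
            (fun j : ℕ => p.coeff j * (PowerSeries.coeff ((r:ℕ) + d - j)) G) (d+1)
      _ = (PowerSeries.coeff ((r:ℕ)+d)) ((p : PowerSeries ℚ) * G) :=
          convSum p d hdeg G ((r:ℕ)+d) (by omega)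
      _ = 0 := hvan ((r:ℕ)+d) (by omega) (by have := r.isLt; omega)

lemma antiLemma : ∀ (δ : ℕ) (M : Matrix (Fin δ) (Fin δ) ℚ),
    (∀ r c : Fin δ, (r:ℕ)+(c:ℕ)+1 < δ → M r c = 0) →
    (∀ r c : Fin δ, (r:ℕ)+(c:ℕ)+1 = δ → M r c = 1) →
    M.det = (-1 : ℚ)^(δ.choose 2) := by
  intro δ
  induction δ with
  | zero =>
    intro M h0 h1
    simp [Matrix.det_fin_zero]
  | succ n ih =>
    intro M h0 h1
    rw [Matrix.det_succ_row_zero]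
    rw [Finset.sum_eq_single (Fin.last n)]
    · have hlast : ((Fin.last n : Fin (n+1)):ℕ) = n := rfl
      have hM0 : M 0 (Fin.last n) = 1 := h1 0 (Fin.last n) (by simp [hlast])
      have hminor : ((M.submatrix Fin.succ (Fin.last n).succAbove).det : ℚ)
          = (-1:ℚ)^(n.choose 2) := by
        rw [Fin.succAbove_last]
        apply ih
        · intro r c hrc
          apply h0
          simp only [Matrix.submatrix_apply, Fin.val_succ, Fin.coe_castSucc]
          omega
        · intro r c hrc
          apply h1
          simp only [Fin.val_succ, Fin.coe_castSucc]
          omega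
      rw [hM0, hminor, hlast]
      have hch : (n+1).choose 2 = n + n.choose 2 := by
        rw [Nat.choose_succ_succ n 1, Nat.choose_one_right]
      rw [hch, pow_add]
      ring
    · intro b _ hb
      have hbn : (b:ℕ) + 1 < n + 1 := by
        have h1 := b.isLt
        have h2 : (b:ℕ) ≠ n := fun h => hb (Fin.ext (by simp [h]))
        omega
      rw [h0 0 b (by simpa using hbn), mul_zero, zero_mul]
    · intro h
      exact absurd (Finset.mem_univ _) h

lemma peelLemma (G : PowerSeries ℚ) (N' δ : ℕ) (hδ : 1 ≤ δ) (p : Polynomial ℚ)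
    (h0 : p.coeff 0 = 1) (hdeg : p.natDegree ≤ N')
    (hvan : ∀ t, N' ≤ t → t + 1 < N' + (N' + δ) →
      (PowerSeries.coeff t) ((p : PowerSeries ℚ) * G) = 0)
    (hpiv : ∀ t, t + 1 = N' + (N' + δ) →
      (PowerSeries.coeff t) ((p : PowerSeries ℚ) * G) = 1) :
    (HM G (N' + δ)).det = (HM G N').det * (-1 : ℚ)^(δ.choose 2) := by
  set V : Matrix (Fin (N'+δ)) (Fin (N'+δ)) ℚ := Matrix.of (fun t κ : Fin (N'+δ) =>
    if (κ:ℕ) < N' then (if t = κ then 1 else 0)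
    else (if (t:ℕ) ≤ (κ:ℕ) ∧ (κ:ℕ) ≤ (t:ℕ) + N' then p.coeff ((κ:ℕ) - (t:ℕ)) else 0)) with hV
  have hVut : V.BlockTriangular id := by
    intro i j hij
    have hij' : (j:ℕ) < (i:ℕ) := hij
    show (if (j:ℕ) < N' then (if i = j then 1 else 0)
      else (if (i:ℕ) ≤ (j:ℕ) ∧ (j:ℕ) ≤ (i:ℕ) + N' then p.coeff ((j:ℕ) - (i:ℕ)) else 0)) = 0
    split
    · rw [if_neg (fun h => by subst h; omega)]
    · rw [if_neg (by omega)]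
  have hdetV : V.det = 1 := by
    rw [Matrix.det_of_upperTriangular hVut]
    apply Finset.prod_eq_one
    intro κ _
    show (if (κ:ℕ) < N' then (if κ = κ then 1 else 0)
      else (if (κ:ℕ) ≤ (κ:ℕ) ∧ (κ:ℕ) ≤ (κ:ℕ) + N' then p.coeff ((κ:ℕ) - (κ:ℕ)) else 0)) = 1
    split
    · rw [if_pos rfl]
    · rw [if_pos ⟨le_refl _, by omega⟩, Nat.sub_self, h0]
  have hWleft : ∀ (r κ : Fin (N'+δ)), (κ:ℕ) < N' →
      (HM G (N'+δ) * V) r κ = (PowerSeries.coeff ((r:ℕ)+(κ:ℕ))) G := by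
    intro r κ hκ
    rw [Matrix.mul_apply]
    rw [Finset.sum_eq_single κ]
    · show (PowerSeries.coeff ((r:ℕ)+(κ:ℕ))) G * (if (κ:ℕ) < N' then (if κ = κ then 1 else 0) else _) = _
      rw [if_pos hκ, if_pos rfl, mul_one]
    · intro t _ ht
      show (PowerSeries.coeff ((r:ℕ)+(t:ℕ))) G * (if (κ:ℕ) < N' then (if t = κ then 1 else 0) else _) = 0
      rw [if_pos hκ, if_neg ht, mul_zero]
    · intro h; exact absurd (Finset.mem_univ _) h
  have hWright : ∀ (r κ : Fin (N'+δ)), N' ≤ (κ:ℕ) →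
      (HM G (N'+δ) * V) r κ = (PowerSeries.coeff ((r:ℕ)+(κ:ℕ))) ((p : PowerSeries ℚ) * G) := by
    intro r κ hκ
    rw [Matrix.mul_apply]
    calc ∑ t : Fin (N'+δ), HM G (N'+δ) r t * V t κ
        = ∑ t : Fin (N'+δ), (fun u : ℕ => (PowerSeries.coeff ((r:ℕ)+u)) G *
            (if u ≤ (κ:ℕ) ∧ (κ:ℕ) ≤ u + N' then p.coeff ((κ:ℕ) - u) else 0)) (t:ℕ) := by
          refine Finset.sum_congr rfl (fun t _ => ?_)
          show HM G (N'+δ) r t * V t κ = _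
          have hVtκ : V t κ = (if (t:ℕ) ≤ (κ:ℕ) ∧ (κ:ℕ) ≤ (t:ℕ) + N'
              then p.coeff ((κ:ℕ) - (t:ℕ)) else 0) := by
            show (if (κ:ℕ) < N' then _ else _) = _
            rw [if_neg (by omega)]
          rw [hVtκ]
          rfl
      _ = ∑ u ∈ Finset.range (N'+δ), (PowerSeries.coeff ((r:ℕ)+u)) G *
            (if u ≤ (κ:ℕ) ∧ (κ:ℕ) ≤ u + N' then p.coeff ((κ:ℕ) - u) else 0) := by
          exact Fin.sum_univ_eq_sum_range
            (fun u : ℕ => (PowerSeries.coeff ((r:ℕ)+u)) G *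
              (if u ≤ (κ:ℕ) ∧ (κ:ℕ) ≤ u + N' then p.coeff ((κ:ℕ) - u) else 0)) (N'+δ)
      _ = ∑ u ∈ Finset.range ((κ:ℕ)+1), (PowerSeries.coeff ((r:ℕ)+u)) G *
            (if u ≤ (κ:ℕ) ∧ (κ:ℕ) ≤ u + N' then p.coeff ((κ:ℕ) - u) else 0) := by
          refine (Finset.sum_subset (fun x hx => ?_) (fun u hu hnu => ?_)).symm
          · simp only [Finset.mem_range] at *
            have := κ.isLt; omega
          · simp only [Finset.mem_range] at hu hnu
            rw [if_neg (by omega), mul_zero]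
      _ = ∑ u ∈ Finset.range ((κ:ℕ)+1), (fun j : ℕ => if j ≤ N' then
            p.coeff j * (PowerSeries.coeff ((r:ℕ) + (κ:ℕ) - j)) G else 0) ((κ:ℕ) + 1 - 1 - u) := by
          refine Finset.sum_congr rfl (fun u hu => ?_)
          simp only [Finset.mem_range] at hu
          have h1 : (κ:ℕ) + 1 - 1 - u = (κ:ℕ) - u := by omega
          rw [h1]
          show (PowerSeries.coeff ((r:ℕ)+u)) G *
              (if u ≤ (κ:ℕ) ∧ (κ:ℕ) ≤ u + N' then p.coeff ((κ:ℕ) - u) else 0)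
            = (if (κ:ℕ) - u ≤ N' then
                p.coeff ((κ:ℕ)-u) * (PowerSeries.coeff ((r:ℕ) + (κ:ℕ) - ((κ:ℕ)-u))) G else 0)
          by_cases hc : (κ:ℕ) ≤ u + N'
          · rw [if_pos ⟨by omega, hc⟩, if_pos (by omega)]
            have h2 : (r:ℕ) + (κ:ℕ) - ((κ:ℕ) - u) = (r:ℕ) + u := by omega
            rw [h2]
            ring
          · rw [if_neg (by omega), if_neg (by omega), mul_zero]
      _ = ∑ u ∈ Finset.range ((κ:ℕ)+1), (if u ≤ N' then
            p.coeff u * (PowerSeries.coeff ((r:ℕ) + (κ:ℕ) - u)) G else 0) := by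
          exact Finset.sum_range_reflect
            (fun j : ℕ => if j ≤ N' then
              p.coeff j * (PowerSeries.coeff ((r:ℕ) + (κ:ℕ) - j)) G else 0) ((κ:ℕ)+1)
      _ = ∑ u ∈ Finset.range (N'+1), (if u ≤ N' then
            p.coeff u * (PowerSeries.coeff ((r:ℕ) + (κ:ℕ) - u)) G else 0) := by
          refine (Finset.sum_subset (fun x hx => ?_) (fun u hu hnu => ?_)).symm
          · simp only [Finset.mem_range] at *; omega
          · simp only [Finset.mem_range] at hu hnu
            rw [if_neg (by omega)]
      _ = ∑ u ∈ Finset.range (N'+1),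
            p.coeff u * (PowerSeries.coeff ((r:ℕ) + (κ:ℕ) - u)) G := by
          refine Finset.sum_congr rfl (fun u hu => ?_)
          simp only [Finset.mem_range] at hu
          rw [if_pos (by omega)]
      _ = (PowerSeries.coeff ((r:ℕ)+(κ:ℕ))) ((p : PowerSeries ℚ) * G) :=
          convSum p N' hdeg G ((r:ℕ)+(κ:ℕ)) (by omega)
  have hdetW : (HM G (N'+δ) * V).det = (HM G N').det * (-1:ℚ)^(δ.choose 2) := by
    rw [← Matrix.det_submatrix_equiv_self (finSumFinEquiv (m := N') (n := δ)) (HM G (N'+δ) * V)]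
    have hblocks : ((HM G (N'+δ) * V).submatrix ⇑finSumFinEquiv ⇑finSumFinEquiv)
        = Matrix.fromBlocks (HM G N') 0
        (Matrix.of fun (i : Fin δ) (j : Fin N') =>
          (HM G (N'+δ) * V) (finSumFinEquiv (Sum.inr i)) (finSumFinEquiv (Sum.inl j)))
        (Matrix.of fun (i j : Fin δ) =>
          (PowerSeries.coeff ((N'+(i:ℕ)) + (N'+(j:ℕ)))) ((p : PowerSeries ℚ) * G)) := by
      ext i j
      rcases i with i | i <;> rcases j with j | j
      · show (HM G (N'+δ) * V) (finSumFinEquiv (Sum.inl i)) (finSumFinEquiv (Sum.inl j)) = HM G N' i j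
        have hei : ((finSumFinEquiv (Sum.inl i) : Fin (N'+δ)) : ℕ) = (i:ℕ) := by simp
        have hej : ((finSumFinEquiv (Sum.inl j) : Fin (N'+δ)) : ℕ) = (j:ℕ) := by simp
        rw [hWleft _ _ (by rw [hej]; exact j.isLt)]
        rw [hei, hej]
        rfl
      · show (HM G (N'+δ) * V) (finSumFinEquiv (Sum.inl i)) (finSumFinEquiv (Sum.inr j)) = 0
        have hei : ((finSumFinEquiv (Sum.inl i) : Fin (N'+δ)) : ℕ) = (i:ℕ) := by simp
        have hej : ((finSumFinEquiv (Sum.inr j) : Fin (N'+δ)) : ℕ) = N' + (j:ℕ) := by simp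
        rw [hWright _ _ (by rw [hej]; omega), hei, hej]
        apply hvan
        · omega
        · have h1 := i.isLt; have h2 := j.isLt; omega
      · rfl
      · show (HM G (N'+δ) * V) (finSumFinEquiv (Sum.inr i)) (finSumFinEquiv (Sum.inr j)) = _
        have hei : ((finSumFinEquiv (Sum.inr i) : Fin (N'+δ)) : ℕ) = N' + (i:ℕ) := by simp
        have hej : ((finSumFinEquiv (Sum.inr j) : Fin (N'+δ)) : ℕ) = N' + (j:ℕ) := by simp
        rw [hWright _ _ (by rw [hej]; omega), hei, hej]
        rfl
    rw [hblocks, Matrix.det_fromBlocks_zero₁₂]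
    congr 1
    apply antiLemma
    · intro r c hrc
      show (PowerSeries.coeff ((N'+(r:ℕ)) + (N'+(c:ℕ)))) ((p : PowerSeries ℚ) * G) = 0
      exact hvan _ (by omega) (by omega)
    · intro r c hrc
      show (PowerSeries.coeff ((N'+(r:ℕ)) + (N'+(c:ℕ)))) ((p : PowerSeries ℚ) * G) = 1
      exact hpiv _ (by omega)
  calc (HM G (N'+δ)).det = (HM G (N'+δ)).det * V.det := by rw [hdetV, mul_one]
    _ = (HM G (N'+δ) * V).det := (Matrix.det_mul _ _).symm
    _ = (HM G N').det * (-1:ℚ)^(δ.choose 2) := hdetW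

end Stmt11

namespace Stmt11
open PowerSeries Finset

lemma hankel_eq (k : ℕ) (hk : 1 ≤ k) (N : ℕ) :
    hankelDet (2*k+1) (1 - (k:ℤ)) N = (HM (Fk k) N).det := by
  have hm : (Matrix.of fun i j : Fin N => catalanConv (2*k+1) ((i:ℤ)+(j:ℤ)+(1 - (k:ℤ))))
      = Matrix.of fun i j : Fin N => (PowerSeries.coeff ((i:ℕ)+(j:ℕ))) (Fk k) := by
    ext i j
    have harg : (i:ℤ)+(j:ℤ)+(1-(k:ℤ)) = (((i:ℕ)+(j:ℕ) : ℕ):ℤ) + 1 - (k:ℤ) := by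
      push_cast; ring
    rw [Matrix.of_apply, Matrix.of_apply, harg, entry k hk]
  rw [hankelDet, hm]
  rfl

lemma peel_even (k : ℕ) (hk : 1 ≤ k) (n : ℕ) :
    (HM (Fk k) ((2*k+1)*n + k)).det
      = (HM (Fk k) ((2*k+1)*n)).det * (-1:ℚ)^(k.choose 2) := by
  have hprod : (2*k+1)*(2*n) = (2*k+1)*n + (2*k+1)*n := by ring
  refine peelLemma (Fk k) ((2*k+1)*n) k hk (Qp (2*k+1) (2*n)) ?_ ?_ ?_ ?_
  · exact Qp_coeff_zero (2*k+1) (by omega) (2*n)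
  · have := Qp_natDegree k (2*n)
    rwa [dd_even] at this
  · intro t h1 h2
    refine Qp_van k hk (2*n) t ?_ ?_
    · rwa [dd_even]
    · omega
  · intro t ht
    have h2 : t = (2*k+1)*(2*n) + (k-1) := by omega
    rw [h2]
    exact Qp_piv k hk (2*n)

lemma peel_odd (k : ℕ) (hk : 1 ≤ k) (n : ℕ) :
    (HM (Fk k) (((2*k+1)*n + k) + (k+1))).det
      = (HM (Fk k) ((2*k+1)*n + k)).det * (-1:ℚ)^((k+1).choose 2) := by
  have hprod : (2*k+1)*(2*n+1) = (2*k+1)*n + (2*k+1)*n + 2*k+1 := by ring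
  refine peelLemma (Fk k) ((2*k+1)*n + k) (k+1) (by omega) (Qp (2*k+1) (2*n+1)) ?_ ?_ ?_ ?_
  · exact Qp_coeff_zero (2*k+1) (by omega) (2*n+1)
  · have := Qp_natDegree k (2*n+1)
    rwa [dd_odd] at this
  · intro t h1 h2
    refine Qp_van k hk (2*n+1) t ?_ ?_
    · rwa [dd_odd]
    · omega
  · intro t ht
    have h2 : t = (2*k+1)*(2*n+1) + (k-1) := by omega
    rw [h2]
    exact Qp_piv k hk (2*n+1)

lemma evens (k : ℕ) (hk : 1 ≤ k) : ∀ n : ℕ,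
    (HM (Fk k) ((2*k+1)*n)).det = (-1:ℚ)^(k*n) := by
  intro n
  induction n with
  | zero =>
    rw [show (2*k+1)*0 = 0 from by ring]
    rw [Matrix.det_fin_zero]
    rw [show k*0 = 0 from by ring, pow_zero]
  | succ n ih =>
    have hidx : (2*k+1)*(n+1) = ((2*k+1)*n + k) + (k+1) := by ring
    rw [hidx, peel_odd k hk n, peel_even k hk n, ih]
    have hch : (k+1).choose 2 = k + k.choose 2 := by
      rw [Nat.choose_succ_succ k 1, Nat.choose_one_right]
    rw [hch]
    have hsq : (-1:ℚ)^(k.choose 2) * (-1:ℚ)^(k.choose 2) = 1 := by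
      rw [← pow_add]
      have : k.choose 2 + k.choose 2 = 2*(k.choose 2) := by ring
      rw [this, pow_mul]
      norm_num
    have hkn : k*(n+1) = k*n + k := by ring
    rw [hkn, pow_add (-1:ℚ) (k*n) k, pow_add (-1:ℚ) k (k.choose 2)]
    calc (-1:ℚ)^(k*n) * (-1:ℚ)^(k.choose 2) * ((-1:ℚ)^k * (-1:ℚ)^(k.choose 2))
        = (-1:ℚ)^(k*n) * (-1:ℚ)^k * ((-1:ℚ)^(k.choose 2) * (-1:ℚ)^(k.choose 2)) := by ring
      _ = (-1:ℚ)^(k*n) * (-1:ℚ)^k := by rw [hsq, mul_one]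

end Stmt11


/-- STATEMENT 11: for every positive integer `k` and `n ≥ 0`:
`D_{2k+1,1-k}((2k+1)n) = (-1)^(kn)`,
`D_{2k+1,1-k}((2k+1)n + k) = (-1)^(kn + binom(k,2))`, and
`D_{2k+1,1-k}((2k+1)n + j) = 0` for all other residues `j` modulo `2k+1`. -/
theorem stmt11 (k : ℕ) (hk : 1 ≤ k) (n : ℕ) :
    hankelDet (2 * k + 1) (1 - (k : ℤ)) ((2 * k + 1) * n) = (-1 : ℚ) ^ (k * n) ∧
    hankelDet (2 * k + 1) (1 - (k : ℤ)) ((2 * k + 1) * n + k) =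
      (-1 : ℚ) ^ (k * n + k.choose 2) ∧
    (∀ j : ℕ, j < 2 * k + 1 → j ≠ 0 → j ≠ k →
      hankelDet (2 * k + 1) (1 - (k : ℤ)) ((2 * k + 1) * n + j) = 0) := by
  open Stmt11 in
  refine ⟨?_, ?_, ?_⟩
  · rw [Stmt11.hankel_eq k hk]
    exact Stmt11.evens k hk n
  · rw [Stmt11.hankel_eq k hk]
    rw [Stmt11.peel_even k hk n, Stmt11.evens k hk n, pow_add]
  · intro j hj1 hj2 hj3
    rw [Stmt11.hankel_eq k hk]
    rcases lt_or_gt_of_ne (hj3 : j ≠ k) with hlt | hgt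
    · -- 1 ≤ j < k : use i = 2n
      have hprod : (2*k+1)*(2*n) = (2*k+1)*n + (2*k+1)*n := by ring
      refine Stmt11.zeroLemma (Stmt11.Fk k) (Stmt11.Qp (2*k+1) (2*n)) ((2*k+1)*n)
        ((2*k+1)*n + j) (by omega) ?_ ?_ ?_
      · exact Stmt11.Qp_coeff_zero (2*k+1) (by omega) (2*n)
      · have := Stmt11.Qp_natDegree k (2*n)
        rwa [Stmt11.dd_even] at this
      · intro t h1 h2
        refine Stmt11.Qp_van k hk (2*n) t ?_ ?_
        · rwa [Stmt11.dd_even]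
        · omega
    · -- k < j ≤ 2k : use i = 2n+1
      have hprod : (2*k+1)*(2*n+1) = (2*k+1)*n + (2*k+1)*n + 2*k+1 := by ring
      refine Stmt11.zeroLemma (Stmt11.Fk k) (Stmt11.Qp (2*k+1) (2*n+1)) ((2*k+1)*n + k)
        ((2*k+1)*n + j) (by omega) ?_ ?_ ?_
      · exact Stmt11.Qp_coeff_zero (2*k+1) (by omega) (2*n+1)
      · have := Stmt11.Qp_natDegree k (2*n+1)
        rwa [Stmt11.dd_odd] at this
      · intro t h1 h2
        refine Stmt11.Qp_van k hk (2*n+1) t ?_ ?_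
        · rwa [Stmt11.dd_odd]
        · omega
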